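/- In the setting of unipotent stabilization (L/K quadratic Galois, char K ≠ 2, τ the nontrivial Galois element, θ the induced semilinear involution of W_L = L ⊗_K W_K), assume additionally that W_+ = θ(W_-) and W_- = θ(W_+), and let φ_± : W_± → θ(W_∓) = W_± be L-linear isomorphisms with φ_-^τ ∘ φ_+ = id_{W_+} + n, n nilpotent. Define φ̃_± := (1/2)(φ_± + (φ_∓^τ)^{-1}). Then: (1) if φ_+ ∘ φ_-^τ = φ_-^τ ∘ φ_+ and φ_- ∘ φ_+^τ = φ_+^τ ∘ φ_-, then φ̃_+ ∘ φ̃_-^τ = φ̃_-^τ ∘ φ̃_+ and φ̃_- ∘ φ̃_+^τ = φ̃_+^τ ∘ φ̃_-; (2) if in addition φ_± = id_{W_±} + m_± with m_± nilpotent, then φ̃_± = id_{W_±} + m̃_± with m̃_± nilpotent. -/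

import Mathlib

open scoped TensorProduct

/-- The `τ`-semilinear involution `θ : L ⊗[K] W_K → L ⊗[K] W_K`,
`a ⊗ w ↦ τ(a) ⊗ w`, induced by a Galois automorphism `τ ∈ Gal(L/K)`. -/
noncomputable def thetaMap (K L : Type*) [Field K] [Field L] [Algebra K L]
    (τ : L ≃ₐ[K] L) (WK : Type*) [AddCommGroup WK] [Module K WK] :
    (L ⊗[K] WK) → (L ⊗[K] WK) :=
  fun x => LinearMap.rTensor WK τ.toLinearMap x

/-- The `τ`-conjugate `φ^τ := θ ∘ φ ∘ θ` of a map `φ : A → B` between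
subspaces, as a map `C → D` (where `θ` maps `C` into `A` and `B` into `D`). -/
def conjFun {L : Type*} [Field L] {WL : Type*} [AddCommGroup WL] [Module L WL]
    (θ : WL → WL) (A B C D : Submodule L WL) (f : ↥A → ↥B)
    (h1 : ∀ x : WL, x ∈ C → θ x ∈ A) (h2 : ∀ x : WL, x ∈ B → θ x ∈ D) :
    ↥C → ↥D :=
  fun x => ⟨θ ((f ⟨θ (x : WL), h1 x x.2⟩ : ↥B) : WL),
    h2 _ (f ⟨θ (x : WL), h1 x x.2⟩).2⟩

/-- One step of unipotent stabilization: it replaces the pair `(φ₊, φ₋)` with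
the pair `(½(φ₊ + (φ₋^τ)⁻¹), ½(φ₋ + (φ₊^τ)⁻¹))`. -/
noncomputable def stabStep {L : Type*} [Field L] {WL : Type*} [AddCommGroup WL]
    [Module L WL] (θ : WL → WL) (Wp Wm Tp Tm : Submodule L WL)
    (h1 : ∀ x : WL, x ∈ Tp → θ x ∈ Wm) (h2 : ∀ x : WL, x ∈ Tm → θ x ∈ Wp)
    (fp : ↥Wp → ↥Tp) (fm : ↥Wm → ↥Tm) : (↥Wp → ↥Tp) × (↥Wm → ↥Tm) :=
  (fun x => (2 : L)⁻¹ • (fp x + Function.invFun (conjFun θ Wm Tm Tp Wp fm h1 h2) x),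
   fun y => (2 : L)⁻¹ • (fm y + Function.invFun (conjFun θ Wp Tp Tm Wm fp h2 h1) y))

/-! ### Auxiliary ring-theoretic lemmas -/

private lemma aux_comm {R : Type*} [Ring R] (u v : Rˣ) (h : Commute (u : R) v) :
    ((u : R) + ↑v⁻¹) * ((v : R) + ↑u⁻¹) = ((v : R) + ↑u⁻¹) * ((u : R) + ↑v⁻¹) := by
  have h5 : ((v⁻¹ : Rˣ) : R) * ↑u⁻¹ = ↑u⁻¹ * ↑v⁻¹ := (h.units_inv_right.symm.units_inv_right).eq
  simp only [add_mul, mul_add, Units.mul_inv, Units.inv_mul, h.eq, h5]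

private lemma aux_nil {L R : Type*} [Field L] [Ring R] [Algebra L R] {c : L}
    (hc : c + c = 1) (u v : Rˣ) (h : Commute (u : R) v) {n : R}
    (hvu : (v : R) * u = 1 + n) (hn : IsNilpotent n) (hm : IsNilpotent ((u : R) - 1)) :
    IsNilpotent (c • ((u : R) + ↑v⁻¹) - 1) := by
  have hn' : n = (v : R) * u - 1 := by rw [hvu, add_sub_cancel_left]
  have hnu : Commute n (u : R) := by
    have : Commute ((v : R) * u - 1) (u : R) :=
      (h.symm.mul_left (Commute.refl _)).sub_left (Commute.one_left _)
    rwa [← hn'] at this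
  have hmu : Commute n ((u : R) - 1) := hnu.sub_right (Commute.one_right _)
  have h1 : IsNilpotent (n - ((u : R) - 1)) := hmu.isNilpotent_sub hn hm
  have hveq : (v : R) - 1 = (n - ((u : R) - 1)) * ↑u⁻¹ := by
    rw [hn']
    have e : ((v : R) * u - 1 - ((u : R) - 1)) = ((v : R) - 1) * u := by noncomm_ring
    rw [e, mul_assoc, Units.mul_inv, mul_one]
  have hcnu : Commute (n - ((u : R) - 1)) ((u⁻¹ : Rˣ) : R) :=
    ((hnu.sub_left ((Commute.refl _).sub_left (Commute.one_left _))).units_inv_right)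
  have h2 : IsNilpotent ((v : R) - 1) := by
    rw [hveq]; exact hcnu.isNilpotent_mul_right h1
  have h3 : IsNilpotent (((v⁻¹ : Rˣ) : R) - 1) := by
    have heq : ((v⁻¹ : Rˣ) : R) - 1 = (1 - (v : R)) * ↑v⁻¹ := by
      rw [sub_mul, one_mul, Units.mul_inv]
    rw [heq]
    have hc1 : Commute ((1 : R) - (v : R)) ((v⁻¹ : Rˣ) : R) :=
      ((Commute.one_left _).sub_left (Commute.refl _)).units_inv_right
    have : IsNilpotent ((1 : R) - (v : R)) := by
      rw [show (1 : R) - (v : R) = -((v : R) - 1) by noncomm_ring]; exact h2.neg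
    exact hc1.isNilpotent_mul_right this
  have hone : (1 : R) = c • (1 : R) + c • (1 : R) := by rw [← add_smul, hc, one_smul]
  have hkey : c • ((u : R) + ↑v⁻¹) - 1 = c • ((u : R) - 1) + c • (((v⁻¹ : Rˣ) : R) - 1) := by
    rw [smul_sub, smul_sub, smul_add]
    nth_rewrite 1 [hone]
    abel
  rw [hkey]
  have hbase : Commute ((u : R) - 1) (((v⁻¹ : Rˣ) : R) - 1) :=
    ((h.units_inv_right).sub_right (Commute.one_right _)).sub_left (Commute.one_left _)
  have hcomm' : Commute (c • ((u : R) - 1)) (c • (((v⁻¹ : Rˣ) : R) - 1)) := by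
    show _ = _
    rw [smul_mul_assoc, mul_smul_comm, smul_mul_assoc, mul_smul_comm, hbase.eq]
  exact hcomm'.isNilpotent_add (hm.smul c) (h3.smul c)

private lemma invFun_eq_symm {L M N : Type*} [Field L] [AddCommGroup M] [Module L M]
    [AddCommGroup N] [Module L N] (f : M →ₗ[L] N) (hf : Function.Bijective f) :
    Function.invFun ⇑f = ⇑(LinearEquiv.ofBijective f hf).symm := by
  funext y
  have h1 : ⇑f ((LinearEquiv.ofBijective f hf).symm y) = y :=
    (LinearEquiv.ofBijective f hf).apply_symm_apply y
  conv_lhs => rw [← h1]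
  exact Function.leftInverse_invFun hf.injective _

/-! ### Main auxiliary theorem with an abstract involution -/

private theorem main_aux {L : Type*} [Field L] {WL : Type*} [AddCommGroup WL] [Module L WL]
    (θ : WL → WL) (σ : L → L)
    (hθθ : ∀ x, θ (θ x) = x)
    (hθadd : ∀ x y, θ (x + y) = θ x + θ y)
    (hθsmul : ∀ (a : L) (x : WL), θ (a • x) = σ a • θ x)
    (hσσ : ∀ a, σ (σ a) = a)
    (hσ2 : σ ((2 : L)⁻¹) = (2 : L)⁻¹)
    (h2 : (2 : L) ≠ 0)
    (Wp Wm : Submodule L WL)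
    (hWp : ∀ x : WL, x ∈ Wp ↔ θ x ∈ Wm)
    (hWm : ∀ x : WL, x ∈ Wm ↔ θ x ∈ Wp)
    (φp : ↥Wp →ₗ[L] ↥Wp) (φm : ↥Wm →ₗ[L] ↥Wm)
    (hφp : Function.Bijective φp) (hφm : Function.Bijective φm)
    (n : ↥Wp →ₗ[L] ↥Wp) (hn : IsNilpotent n)
    (hcomp : ∀ x : ↥Wp,
      conjFun θ Wm Wm Wp Wp (⇑φm)
        (fun x hx => (hWp x).mp hx) (fun x hx => (hWm x).mp hx) (φp x)
      = x + n x)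
    (hcomm1 : ∀ x : ↥Wp,
      φp (conjFun θ Wm Wm Wp Wp (⇑φm)
        (fun x hx => (hWp x).mp hx) (fun x hx => (hWm x).mp hx) x)
      = conjFun θ Wm Wm Wp Wp (⇑φm)
        (fun x hx => (hWp x).mp hx) (fun x hx => (hWm x).mp hx) (φp x))
    (hcomm2 : ∀ y : ↥Wm,
      φm (conjFun θ Wp Wp Wm Wm (⇑φp)
        (fun x hx => (hWm x).mp hx) (fun x hx => (hWp x).mp hx) y)
      = conjFun θ Wp Wp Wm Wm (⇑φp)
        (fun x hx => (hWm x).mp hx) (fun x hx => (hWp x).mp hx) (φm y)) :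
    ((∀ x : ↥Wp,
      (stabStep θ Wp Wm Wp Wm
          (fun x hx => (hWp x).mp hx) (fun x hx => (hWm x).mp hx) (⇑φp) (⇑φm)).1
        (conjFun θ Wm Wm Wp Wp
          ((stabStep θ Wp Wm Wp Wm
            (fun x hx => (hWp x).mp hx) (fun x hx => (hWm x).mp hx) (⇑φp) (⇑φm)).2)
          (fun x hx => (hWp x).mp hx) (fun x hx => (hWm x).mp hx) x)
      = conjFun θ Wm Wm Wp Wp
          ((stabStep θ Wp Wm Wp Wm
            (fun x hx => (hWp x).mp hx) (fun x hx => (hWm x).mp hx) (⇑φp) (⇑φm)).2)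
          (fun x hx => (hWp x).mp hx) (fun x hx => (hWm x).mp hx)
          ((stabStep θ Wp Wm Wp Wm
            (fun x hx => (hWp x).mp hx) (fun x hx => (hWm x).mp hx) (⇑φp) (⇑φm)).1 x)) ∧
     (∀ y : ↥Wm,
      (stabStep θ Wp Wm Wp Wm
          (fun x hx => (hWp x).mp hx) (fun x hx => (hWm x).mp hx) (⇑φp) (⇑φm)).2
        (conjFun θ Wp Wp Wm Wm
          ((stabStep θ Wp Wm Wp Wm
            (fun x hx => (hWp x).mp hx) (fun x hx => (hWm x).mp hx) (⇑φp) (⇑φm)).1)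
          (fun x hx => (hWm x).mp hx) (fun x hx => (hWp x).mp hx) y)
      = conjFun θ Wp Wp Wm Wm
          ((stabStep θ Wp Wm Wp Wm
            (fun x hx => (hWp x).mp hx) (fun x hx => (hWm x).mp hx) (⇑φp) (⇑φm)).1)
          (fun x hx => (hWm x).mp hx) (fun x hx => (hWp x).mp hx)
          ((stabStep θ Wp Wm Wp Wm
            (fun x hx => (hWp x).mp hx) (fun x hx => (hWm x).mp hx) (⇑φp) (⇑φm)).2 y))) ∧
    (IsNilpotent (φp - LinearMap.id) → IsNilpotent (φm - LinearMap.id) →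
      (∃ mp : ↥Wp →ₗ[L] ↥Wp, IsNilpotent mp ∧ ∀ x : ↥Wp,
        (stabStep θ Wp Wm Wp Wm
          (fun x hx => (hWp x).mp hx) (fun x hx => (hWm x).mp hx) (⇑φp) (⇑φm)).1 x
        = x + mp x) ∧
      (∃ mm : ↥Wm →ₗ[L] ↥Wm, IsNilpotent mm ∧ ∀ y : ↥Wm,
        (stabStep θ Wp Wm Wp Wm
          (fun x hx => (hWp x).mp hx) (fun x hx => (hWm x).mp hx) (⇑φp) (⇑φm)).2 y
        = y + mm y)) := by
  classical
  have hθ0 : θ 0 = 0 := by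
    have := hθadd 0 0
    rw [add_zero] at this
    exact (left_eq_add.mp this)
  -- transport maps between the two submodules
  let Tp : ↥Wp → ↥Wm := fun x => ⟨θ x, (hWp x).mp x.2⟩
  let Tm : ↥Wm → ↥Wp := fun y => ⟨θ y, (hWm y).mp y.2⟩
  have hTmTp : ∀ x, Tm (Tp x) = x := fun x => Subtype.ext (hθθ x)
  have hTpTm : ∀ y, Tp (Tm y) = y := fun y => Subtype.ext (hθθ y)
  have hTp0 : Tp 0 = 0 := Subtype.ext hθ0
  have hTm0 : Tm 0 = 0 := Subtype.ext hθ0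
  have hTp_add : ∀ x y, Tp (x + y) = Tp x + Tp y := fun x y => Subtype.ext (hθadd x y)
  have hTm_add : ∀ x y, Tm (x + y) = Tm x + Tm y := fun x y => Subtype.ext (hθadd x y)
  have hTp_smul : ∀ (a : L) x, Tp (a • x) = σ a • Tp x := fun a x => Subtype.ext (hθsmul a x)
  have hTm_smul : ∀ (a : L) x, Tm (a • x) = σ a • Tm x := fun a x => Subtype.ext (hθsmul a x)
  -- the conjugate maps as linear maps
  let ψ : ↥Wp →ₗ[L] ↥Wp :=
    { toFun := Tm ∘ ⇑φm ∘ Tp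
      map_add' := by intro x y; simp only [Function.comp_apply, hTp_add, map_add, hTm_add]
      map_smul' := by
        intro a x
        simp only [Function.comp_apply, hTp_smul, map_smul, hTm_smul, hσσ, RingHom.id_apply] }
  let χ : ↥Wm →ₗ[L] ↥Wm :=
    { toFun := Tp ∘ ⇑φp ∘ Tm
      map_add' := by intro x y; simp only [Function.comp_apply, hTm_add, map_add, hTp_add]
      map_smul' := by
        intro a x
        simp only [Function.comp_apply, hTm_smul, map_smul, hTp_smul, hσσ, RingHom.id_apply] }
  have hψ_eq : conjFun θ Wm Wm Wp Wp (⇑φm)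
      (fun x hx => (hWp x).mp hx) (fun x hx => (hWm x).mp hx) = ⇑ψ := rfl
  have hχ_eq : conjFun θ Wp Wp Wm Wm (⇑φp)
      (fun x hx => (hWm x).mp hx) (fun x hx => (hWp x).mp hx) = ⇑χ := rfl
  have hTp_bij : Function.Bijective Tp := Function.bijective_iff_has_inverse.mpr ⟨Tm, hTmTp, hTpTm⟩
  have hTm_bij : Function.Bijective Tm := Function.bijective_iff_has_inverse.mpr ⟨Tp, hTpTm, hTmTp⟩
  have hψ_bij : Function.Bijective ψ := hTm_bij.comp (hφm.comp hTp_bij)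
  have hχ_bij : Function.Bijective χ := hTp_bij.comp (hφp.comp hTm_bij)
  let eψ := LinearEquiv.ofBijective ψ hψ_bij
  let eχ := LinearEquiv.ofBijective χ hχ_bij
  let ep := LinearEquiv.ofBijective φp hφp
  let em := LinearEquiv.ofBijective φm hφm
  -- pointwise versions of the hypotheses
  have hcomp' : ∀ x : ↥Wp, ψ (φp x) = x + n x := by
    intro x; have := hcomp x; rwa [hψ_eq] at this
  have hcomm1' : ∀ x : ↥Wp, φp (ψ x) = ψ (φp x) := by
    intro x; have := hcomm1 x; rwa [hψ_eq] at this
  have hcomm2' : ∀ y : ↥Wm, φm (χ y) = χ (φm y) := by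
    intro y; have := hcomm2 y; rwa [hχ_eq] at this
  -- units in the endomorphism rings
  let up : (Module.End L ↥Wp)ˣ :=
    ⟨φp, ep.symm.toLinearMap,
      LinearMap.ext fun x => ep.apply_symm_apply x,
      LinearMap.ext fun x => ep.symm_apply_apply x⟩
  let uψ : (Module.End L ↥Wp)ˣ :=
    ⟨ψ, eψ.symm.toLinearMap,
      LinearMap.ext fun x => eψ.apply_symm_apply x,
      LinearMap.ext fun x => eψ.symm_apply_apply x⟩
  let um : (Module.End L ↥Wm)ˣ :=
    ⟨φm, em.symm.toLinearMap,
      LinearMap.ext fun x => em.apply_symm_apply x,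
      LinearMap.ext fun x => em.symm_apply_apply x⟩
  let uχ : (Module.End L ↥Wm)ˣ :=
    ⟨χ, eχ.symm.toLinearMap,
      LinearMap.ext fun x => eχ.apply_symm_apply x,
      LinearMap.ext fun x => eχ.symm_apply_apply x⟩
  have hcφψ : Commute (φp : Module.End L ↥Wp) ψ := by
    exact LinearMap.ext fun x => hcomm1' x
  have hcφχ : Commute (φm : Module.End L ↥Wm) χ := by
    exact LinearMap.ext fun y => hcomm2' y
  have hvu : ψ * φp = (1 : Module.End L ↥Wp) + n :=
    LinearMap.ext fun x => hcomp' x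
  -- the stabilized maps as linear maps
  let Sp : ↥Wp →ₗ[L] ↥Wp := (2 : L)⁻¹ • (φp + eψ.symm.toLinearMap)
  let Sm : ↥Wm →ₗ[L] ↥Wm := (2 : L)⁻¹ • (φm + eχ.symm.toLinearMap)
  have hSp : (stabStep θ Wp Wm Wp Wm (fun x hx => (hWp x).mp hx)
      (fun x hx => (hWm x).mp hx) ⇑φp ⇑φm).1 = ⇑Sp := by
    funext x
    show (2 : L)⁻¹ • (φp x + Function.invFun (conjFun θ Wm Wm Wp Wp ⇑φm
      (fun x hx => (hWp x).mp hx) (fun x hx => (hWm x).mp hx)) x) = Sp x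
    rw [hψ_eq, invFun_eq_symm ψ hψ_bij]
    rfl
  have hSm : (stabStep θ Wp Wm Wp Wm (fun x hx => (hWp x).mp hx)
      (fun x hx => (hWm x).mp hx) ⇑φp ⇑φm).2 = ⇑Sm := by
    funext y
    show (2 : L)⁻¹ • (φm y + Function.invFun (conjFun θ Wp Wp Wm Wm ⇑φp
      (fun x hx => (hWm x).mp hx) (fun x hx => (hWp x).mp hx)) y) = Sm y
    rw [hχ_eq, invFun_eq_symm χ hχ_bij]
    rfl
  -- identification of conjugated inverses
  have hfTm : ∀ z : ↥Wm, Tm (χ z) = φp (Tm z) := fun z => hTmTp (φp (Tm z))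
  have hfTp : ∀ z : ↥Wp, Tp (ψ z) = φm (Tp z) := fun z => hTpTm (φm (Tp z))
  have hTmem : ∀ w : ↥Wm, Tm (eχ.symm w) = ep.symm (Tm w) := by
    intro w
    apply hφp.injective
    have e1 : φp (Tm (eχ.symm w)) = Tm (χ (eχ.symm w)) := (hfTm _).symm
    have e2 : Tm (χ (eχ.symm w)) = Tm w := by
      have h3 := eχ.apply_symm_apply w
      rw [LinearEquiv.ofBijective_apply] at h3
      rw [h3]
    show φp (Tm (eχ.symm w)) = φp (ep.symm (Tm w))
    rw [e1, e2]
    exact (ep.apply_symm_apply (Tm w)).symm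
  have hTpem : ∀ w : ↥Wp, Tp (eψ.symm w) = em.symm (Tp w) := by
    intro w
    apply hφm.injective
    have e1 : φm (Tp (eψ.symm w)) = Tp (ψ (eψ.symm w)) := (hfTp _).symm
    have e2 : Tp (ψ (eψ.symm w)) = Tp w := by
      have h3 := eψ.apply_symm_apply w
      rw [LinearEquiv.ofBijective_apply] at h3
      rw [h3]
    show φm (Tp (eψ.symm w)) = φm (em.symm (Tp w))
    rw [e1, e2]
    exact (em.apply_symm_apply (Tp w)).symm
  -- conjugates of the stabilized maps
  let T : ↥Wp →ₗ[L] ↥Wp := (2 : L)⁻¹ • (ψ + ep.symm.toLinearMap)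
  let T2 : ↥Wm →ₗ[L] ↥Wm := (2 : L)⁻¹ • (χ + em.symm.toLinearMap)
  have hconjSm : conjFun θ Wm Wm Wp Wp ⇑Sm (fun x hx => (hWp x).mp hx)
      (fun x hx => (hWm x).mp hx) = ⇑T := by
    funext x
    show Tm ((2 : L)⁻¹ • (φm (Tp x) + eχ.symm (Tp x))) = T x
    rw [hTm_smul, hσ2, hTm_add, hTmem (Tp x), hTmTp]
    rfl
  have hconjSp : conjFun θ Wp Wp Wm Wm ⇑Sp (fun x hx => (hWm x).mp hx)
      (fun x hx => (hWp x).mp hx) = ⇑T2 := by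
    funext y
    show Tp ((2 : L)⁻¹ • (φp (Tm y) + eψ.symm (Tm y))) = T2 y
    rw [hTp_smul, hσ2, hTp_add, hTpem (Tm y), hTpTm]
    rfl
  -- commutation
  have hST : Sp * T = T * Sp := by
    have hac := aux_comm up uψ hcφψ
    show ((2 : L)⁻¹ • ((up : Module.End L ↥Wp) + ↑uψ⁻¹)) *
        ((2 : L)⁻¹ • ((uψ : Module.End L ↥Wp) + ↑up⁻¹)) =
        ((2 : L)⁻¹ • ((uψ : Module.End L ↥Wp) + ↑up⁻¹)) *
        ((2 : L)⁻¹ • ((up : Module.End L ↥Wp) + ↑uψ⁻¹))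
    simp only [smul_mul_assoc, mul_smul_comm]
    rw [hac]
  have hST2 : Sm * T2 = T2 * Sm := by
    have hac := aux_comm um uχ hcφχ
    show ((2 : L)⁻¹ • ((um : Module.End L ↥Wm) + ↑uχ⁻¹)) *
        ((2 : L)⁻¹ • ((uχ : Module.End L ↥Wm) + ↑um⁻¹)) =
        ((2 : L)⁻¹ • ((uχ : Module.End L ↥Wm) + ↑um⁻¹)) *
        ((2 : L)⁻¹ • ((um : Module.End L ↥Wm) + ↑uχ⁻¹))
    simp only [smul_mul_assoc, mul_smul_comm]
    rw [hac]
  -- the conjugated nilpotent on the minus side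
  have h2half : (2 : L)⁻¹ + (2 : L)⁻¹ = 1 := by
    rw [← two_mul, mul_inv_cancel₀ h2]
  let n' : ↥Wm →ₗ[L] ↥Wm :=
    { toFun := Tp ∘ ⇑n ∘ Tm
      map_add' := by intro x y; simp only [Function.comp_apply, hTm_add, map_add, hTp_add]
      map_smul' := by
        intro a x
        simp only [Function.comp_apply, hTm_smul, map_smul, hTp_smul, hσσ, RingHom.id_apply] }
  have hn'nil : IsNilpotent n' := by
    obtain ⟨k, hk⟩ := hn
    refine ⟨k, ?_⟩
    have key : ∀ j (y : ↥Wm), (n' ^ j) y = Tp ((n ^ j) (Tm y)) := by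
      intro j
      induction j with
      | zero => intro y; simp only [pow_zero, Module.End.one_apply]; exact (hTpTm y).symm
      | succ j ih =>
          intro y
          rw [pow_succ, Module.End.mul_apply, ih]
          have e : Tm (n' y) = n (Tm y) := hTmTp (n (Tm y))
          rw [e, ← Module.End.mul_apply, ← pow_succ]
    refine LinearMap.ext fun y => ?_
    rw [key k y, hk]
    simp only [LinearMap.zero_apply]
    exact hTp0
  have hvu2 : χ * φm = (1 : Module.End L ↥Wm) + n' := by
    refine LinearMap.ext fun y => ?_
    have e1 : φm (χ y) = y + n' y := by
      have e2 : φm (χ y) = Tp (ψ (φp (Tm y))) := by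
        show φm (Tp (φp (Tm y))) = Tp (Tm (φm (Tp (φp (Tm y)))))
        rw [hTpTm]
      rw [e2, show ψ (φp (Tm y)) = Tm y + n (Tm y) from hcomp' (Tm y), hTp_add, hTpTm]
      rfl
    exact ((hcomm2' y).symm.trans e1)
  -- conclude
  refine ⟨⟨?_, ?_⟩, ?_⟩
  · simp only [hSp, hSm, hconjSm]
    intro x
    exact LinearMap.congr_fun hST x
  · simp only [hSp, hSm, hconjSp]
    intro y
    exact LinearMap.congr_fun hST2 y
  · intro hmp hmm
    have hmp' : IsNilpotent ((up : Module.End L ↥Wp) - 1) := by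
      rwa [Module.End.one_eq_id]
    have hmm' : IsNilpotent ((um : Module.End L ↥Wm) - 1) := by
      rwa [Module.End.one_eq_id]
    refine ⟨⟨Sp - LinearMap.id, ?_, ?_⟩, ⟨Sm - LinearMap.id, ?_, ?_⟩⟩
    · have hres := aux_nil h2half up uψ hcφψ hvu hn hmp'
      rwa [Module.End.one_eq_id] at hres
    · intro x
      simp only [hSp, LinearMap.sub_apply, LinearMap.id_apply]
      abel
    · have hres := aux_nil h2half um uχ hcφχ hvu2 hn'nil hmm'
      rwa [Module.End.one_eq_id] at hres
    · intro y
      simp only [hSm, LinearMap.sub_apply, LinearMap.id_apply]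
      abel

theorem stmt_5 (K L : Type*) [Field K] [Field L] [Algebra K L] [IsGalois K L]
    (hdeg : Module.finrank K L = 2) (hchar : (2 : K) ≠ 0)
    (τ : L ≃ₐ[K] L) (hτ : τ ≠ 1)
    (WK : Type*) [AddCommGroup WK] [Module K WK]
    (Wp Wm : Submodule L (L ⊗[K] WK))
    (hWp : ∀ x : L ⊗[K] WK, x ∈ Wp ↔ thetaMap K L τ WK x ∈ Wm)
    (hWm : ∀ x : L ⊗[K] WK, x ∈ Wm ↔ thetaMap K L τ WK x ∈ Wp)
    (φp : ↥Wp →ₗ[L] ↥Wp) (φm : ↥Wm →ₗ[L] ↥Wm)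
    (hφp : Function.Bijective φp) (hφm : Function.Bijective φm)
    (n : ↥Wp →ₗ[L] ↥Wp) (hn : IsNilpotent n)
    (hcomp : ∀ x : ↥Wp,
      conjFun (thetaMap K L τ WK) Wm Wm Wp Wp (⇑φm)
        (fun x hx => (hWp x).mp hx) (fun x hx => (hWm x).mp hx) (φp x)
      = x + n x)
    (hcomm1 : ∀ x : ↥Wp,
      φp (conjFun (thetaMap K L τ WK) Wm Wm Wp Wp (⇑φm)
        (fun x hx => (hWp x).mp hx) (fun x hx => (hWm x).mp hx) x)
      = conjFun (thetaMap K L τ WK) Wm Wm Wp Wp (⇑φm)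
        (fun x hx => (hWp x).mp hx) (fun x hx => (hWm x).mp hx) (φp x))
    (hcomm2 : ∀ y : ↥Wm,
      φm (conjFun (thetaMap K L τ WK) Wp Wp Wm Wm (⇑φp)
        (fun x hx => (hWm x).mp hx) (fun x hx => (hWp x).mp hx) y)
      = conjFun (thetaMap K L τ WK) Wp Wp Wm Wm (⇑φp)
        (fun x hx => (hWm x).mp hx) (fun x hx => (hWp x).mp hx) (φm y)) :
    ((∀ x : ↥Wp,
      (stabStep (thetaMap K L τ WK) Wp Wm Wp Wm
          (fun x hx => (hWp x).mp hx) (fun x hx => (hWm x).mp hx) (⇑φp) (⇑φm)).1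
        (conjFun (thetaMap K L τ WK) Wm Wm Wp Wp
          ((stabStep (thetaMap K L τ WK) Wp Wm Wp Wm
            (fun x hx => (hWp x).mp hx) (fun x hx => (hWm x).mp hx) (⇑φp) (⇑φm)).2)
          (fun x hx => (hWp x).mp hx) (fun x hx => (hWm x).mp hx) x)
      = conjFun (thetaMap K L τ WK) Wm Wm Wp Wp
          ((stabStep (thetaMap K L τ WK) Wp Wm Wp Wm
            (fun x hx => (hWp x).mp hx) (fun x hx => (hWm x).mp hx) (⇑φp) (⇑φm)).2)
          (fun x hx => (hWp x).mp hx) (fun x hx => (hWm x).mp hx)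
          ((stabStep (thetaMap K L τ WK) Wp Wm Wp Wm
            (fun x hx => (hWp x).mp hx) (fun x hx => (hWm x).mp hx) (⇑φp) (⇑φm)).1 x)) ∧
     (∀ y : ↥Wm,
      (stabStep (thetaMap K L τ WK) Wp Wm Wp Wm
          (fun x hx => (hWp x).mp hx) (fun x hx => (hWm x).mp hx) (⇑φp) (⇑φm)).2
        (conjFun (thetaMap K L τ WK) Wp Wp Wm Wm
          ((stabStep (thetaMap K L τ WK) Wp Wm Wp Wm
            (fun x hx => (hWp x).mp hx) (fun x hx => (hWm x).mp hx) (⇑φp) (⇑φm)).1)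
          (fun x hx => (hWm x).mp hx) (fun x hx => (hWp x).mp hx) y)
      = conjFun (thetaMap K L τ WK) Wp Wp Wm Wm
          ((stabStep (thetaMap K L τ WK) Wp Wm Wp Wm
            (fun x hx => (hWp x).mp hx) (fun x hx => (hWm x).mp hx) (⇑φp) (⇑φm)).1)
          (fun x hx => (hWm x).mp hx) (fun x hx => (hWp x).mp hx)
          ((stabStep (thetaMap K L τ WK) Wp Wm Wp Wm
            (fun x hx => (hWp x).mp hx) (fun x hx => (hWm x).mp hx) (⇑φp) (⇑φm)).2 y))) ∧
    (IsNilpotent (@HSub.hSub _ _ _ (@instHSub _ (@LinearMap.addCommGroup L L ↥Wp ↥Wp _ _ _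
      (Submodule.addCommGroup Wp) _ _ _).toSub) φp LinearMap.id) → IsNilpotent (@HSub.hSub _ _ _ (@instHSub _ (@LinearMap.addCommGroup L L ↥Wm ↥Wm _ _ _
      (Submodule.addCommGroup Wm) _ _ _).toSub) φm LinearMap.id) →
      (∃ mp : ↥Wp →ₗ[L] ↥Wp, IsNilpotent mp ∧ ∀ x : ↥Wp,
        (stabStep (thetaMap K L τ WK) Wp Wm Wp Wm
          (fun x hx => (hWp x).mp hx) (fun x hx => (hWm x).mp hx) (⇑φp) (⇑φm)).1 x
        = x + mp x) ∧
      (∃ mm : ↥Wm →ₗ[L] ↥Wm, IsNilpotent mm ∧ ∀ y : ↥Wm,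
        (stabStep (thetaMap K L τ WK) Wp Wm Wp Wm
          (fun x hx => (hWp x).mp hx) (fun x hx => (hWm x).mp hx) (⇑φp) (⇑φm)).2 y
        = y + mm y)) := by
  have hfin : FiniteDimensional K L :=
    Module.finite_of_finrank_pos (by rw [hdeg]; norm_num)
  have hτ2 : ∀ a : L, τ (τ a) = a := by
    have hcard : Fintype.card (L ≃ₐ[K] L) = 2 := by
      rw [← Nat.card_eq_fintype_card, IsGalois.card_aut_eq_finrank, hdeg]
    have horder : orderOf τ ∣ 2 := hcard ▸ orderOf_dvd_card
    have h1 : τ * τ = 1 := by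
      rcases (Nat.dvd_prime Nat.prime_two).mp horder with h | h
      · exact absurd (orderOf_eq_one_iff.mp h) hτ
      · have := pow_orderOf_eq_one τ
        rwa [h, sq] at this
    intro a
    have : (τ * τ) a = (1 : L ≃ₐ[K] L) a := by rw [h1]
    simpa using this
  have hθθ : ∀ x, thetaMap K L τ WK (thetaMap K L τ WK x) = x := by
    intro x
    show LinearMap.rTensor WK τ.toLinearMap (LinearMap.rTensor WK τ.toLinearMap x) = x
    rw [← LinearMap.comp_apply, ← LinearMap.rTensor_comp]
    have : τ.toLinearMap ∘ₗ τ.toLinearMap = LinearMap.id := by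
      ext a; simpa using hτ2 a
    rw [this, LinearMap.rTensor_id, LinearMap.id_apply]
  have hθadd : ∀ x y, thetaMap K L τ WK (x + y) = thetaMap K L τ WK x + thetaMap K L τ WK y :=
    fun x y => map_add (LinearMap.rTensor WK τ.toLinearMap) x y
  have hθsmul : ∀ (a : L) (x : L ⊗[K] WK),
      thetaMap K L τ WK (a • x) = τ a • thetaMap K L τ WK x := by
    intro a x
    induction x using TensorProduct.induction_on with
    | zero => simp [thetaMap]
    | tmul b w =>
        simp [thetaMap, TensorProduct.smul_tmul', smul_eq_mul, map_mul]
    | add x y hx hy =>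
        rw [smul_add, hθadd, hx, hy, hθadd, smul_add]
  have hσ2 : τ ((2 : L)⁻¹) = (2 : L)⁻¹ := by
    rw [map_inv₀, map_ofNat]
  have h2L : (2 : L) ≠ 0 := by
    intro h
    apply hchar
    have h' : algebraMap K L (2 : K) = algebraMap K L 0 := by
      rw [map_ofNat, map_zero, h]
    exact (algebraMap K L).injective h'
  exact main_aux (thetaMap K L τ WK) (⇑τ) hθθ hθadd hθsmul hτ2 hσ2 h2L Wp Wm hWp hWm
    φp φm hφp hφm n hn hcomp hcomm1 hcomm2
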